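/- There exists an infinite square-free word over the alphabet {0,1,2} that avoids the factors 010 and 212. -/

import Mathlib

abbrev F3 := Fin 3

def tau : F3 → List F3
  | 0 => [0,1,2] | 1 => [0,2] | 2 => [1]

def T (w : List F3) : List F3 := w.flatMap tau

lemma T_append (u v : List F3) : T (u ++ v) = T u ++ T v := List.flatMap_append

lemma T_cons (a : F3) (u : List F3) : T (a :: u) = tau a ++ T u := rfl

lemma T_nil : T [] = [] := rfl

lemma tau_len_pos (a : F3) : 0 < (tau a).length := by fin_cases a <;> simp [tau]

lemma tau_len_le (a : F3) : (tau a).length ≤ 3 := by fin_cases a <;> simp [tau]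

lemma tau_ne_nil (a : F3) : tau a ≠ [] := by
  intro h; have := tau_len_pos a; rw [h] at this; simp at this

lemma T_inj : ∀ {u v : List F3}, T u = T v → u = v
  | [], [] => fun _ => rfl
  | [], b :: v => by
      intro h
      rw [T_nil, T_cons] at h
      exact absurd (List.append_eq_nil_iff.mp h.symm).1 (tau_ne_nil b)
  | a :: u, [] => by
      intro h
      rw [T_nil, T_cons] at h
      exact absurd (List.append_eq_nil_iff.mp h).1 (tau_ne_nil a)
  | a :: u, b :: v => by
      intro h
      rw [T_cons, T_cons] at h
      have hab : a = b := by
        fin_cases a <;> fin_cases b <;> simp_all [tau]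
      subst hab
      rw [T_inj (List.append_cancel_left h)]

def ext (l : List F3) (a b : ℕ) : List F3 := (l.drop a).take (b - a)

lemma ext_length {l : List F3} {a b : ℕ} (hab : a ≤ b) (hb : b ≤ l.length) :
    (ext l a b).length = b - a := by
  simp [ext]; omega

lemma ext_getElem {l : List F3} {a b k : ℕ} (hb : b ≤ l.length) (hk : k < b - a)
    (h : k < (ext l a b).length) : (ext l a b)[k] = l[a + k]'(by omega) := by
  simp only [ext, List.getElem_take, List.getElem_drop]

lemma ext_infix (l : List F3) (a b : ℕ) : ext l a b <:+: l :=
  (List.take_prefix _ _).isInfix.trans (l.drop_suffix a).isInfix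

lemma ext_append {l : List F3} {a b c : ℕ} (hab : a ≤ b) (hbc : b ≤ c) (hc : c ≤ l.length) :
    ext l a c = ext l a b ++ ext l b c := by
  apply List.ext_getElem
  · rw [ext_length (by omega) hc, List.length_append, ext_length hab (by omega),
      ext_length hbc hc]
    omega
  · intro n h1 h2
    have h1' : n < c - a := by rw [ext_length (by omega) hc] at h1; omega
    have hlab : (ext l a b).length = b - a := ext_length hab (by omega)
    by_cases hn : n < b - a
    · rw [List.getElem_append_left (by omega), ext_getElem hc h1',
        ext_getElem (show b ≤ l.length by omega) hn]
    · rw [List.getElem_append_right (by omega), ext_getElem hc h1',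
        ext_getElem hc (by omega)]
      congr 1
      omega

lemma ext_singleton {l : List F3} {a : ℕ} (ha : a < l.length) :
    ext l a (a + 1) = [l[a]] := by
  apply List.ext_getElem
  · rw [ext_length (by omega) (by omega)]; simp
  · intro n h1 h2
    rw [ext_length (by omega) (by omega)] at h1
    have hn : n = 0 := by omega
    subst hn
    rw [ext_getElem (by omega) (by omega)]
    simp

lemma infix_iff_ext {v l : List F3} :
    v <:+: l ↔ ∃ q, q + v.length ≤ l.length ∧ v = ext l q (q + v.length) := by
  constructor
  · rintro ⟨s, t, rfl⟩
    refine ⟨s.length, by simp, ?_⟩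
    simp only [ext, Nat.add_sub_cancel_left]
    rw [List.append_assoc, List.drop_left, List.take_left]
  · rintro ⟨q, hq, hv⟩
    rw [hv]; exact ext_infix _ _ _

lemma fin3_cases (a : F3) : a = 0 ∨ a = 1 ∨ a = 2 := by fin_cases a <;> simp

def P (w : List F3) (i : ℕ) : ℕ := (T (w.take i)).length

lemma P_zero (w : List F3) : P w 0 = 0 := rfl

lemma P_last (w : List F3) : P w w.length = (T w).length := by simp [P]

lemma take_succ_eq {w : List F3} {i : ℕ} (h : i < w.length) :
    w.take (i+1) = w.take i ++ [w[i]] := by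
  rw [← List.take_concat_get h, List.concat_eq_append]

lemma P_succ {w : List F3} {i : ℕ} (h : i < w.length) :
    P w (i+1) = P w i + (tau w[i]).length := by
  unfold P
  rw [take_succ_eq h, T_append]
  simp [T]

lemma T_prefix {u v : List F3} (h : u <+: v) : T u <+: T v := by
  obtain ⟨r, rfl⟩ := h
  exact ⟨T r, (T_append u r).symm⟩

lemma P_mono (w : List F3) : Monotone (P w) := by
  intro i j hij
  exact (T_prefix (List.prefix_of_prefix_length_le (List.take_prefix i w)
    (List.take_prefix j w) (by simp; omega))).length_le

lemma P_lt_succ {w : List F3} {i : ℕ} (h : i < w.length) : P w i < P w (i+1) := by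
  rw [P_succ h]; have := tau_len_pos (w[i]); omega

lemma P_succ_le {w : List F3} {i : ℕ} (h : i < w.length) : P w (i+1) ≤ P w i + 3 := by
  rw [P_succ h]; have := tau_len_le (w[i]); omega

lemma P_strict {w : List F3} {i j : ℕ} (hij : i < j) (hj : j ≤ w.length) :
    P w i < P w j := by
  have h1 : P w (i+1) ≤ P w j := P_mono w hij
  have := P_lt_succ (show i < w.length by omega)
  omega

lemma P_le_len {w : List F3} (i : ℕ) : P w i ≤ (T w).length := by
  rw [← P_last]
  rcases le_or_gt i w.length with h | h
  · exact P_mono w h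
  · unfold P; rw [List.take_of_length_le (by omega)]; simp

lemma lt_of_P_lt {w : List F3} {i j : ℕ} (h : P w i < P w j) : i < j := by
  by_contra hc
  exact absurd (P_mono w (by omega : j ≤ i)) (by omega)

lemma block_exists {w : List F3} {t : ℕ} (ht : t < (T w).length) :
    ∃ i, i < w.length ∧ P w i ≤ t ∧ t < P w (i+1) := by
  classical
  let Q : ℕ → Prop := fun i => P w i ≤ t
  have hQ0 : Q 0 := by simp only [Q, P_zero]; omega
  set i := Nat.findGreatest Q w.length with hi
  have hspec : Q i := Nat.findGreatest_spec (Nat.zero_le _) hQ0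
  have hle : i ≤ w.length := Nat.findGreatest_le _
  have hspec' : P w i ≤ t := hspec
  have hlt : i < w.length := by
    rcases eq_or_lt_of_le hle with h | h
    · exfalso; rw [h, P_last] at hspec'; omega
    · exact h
  refine ⟨i, hlt, hspec', ?_⟩
  by_contra hc
  push_neg at hc
  exact Nat.findGreatest_is_greatest (show i < i + 1 by omega) (by omega)
    (show Q (i+1) from by simpa [Q] using hc)

lemma T_ext {w : List F3} {i j : ℕ} (hij : i ≤ j) (hj : j ≤ w.length) :
    ext (T w) (P w i) (P w j) = T (ext w i j) := by
  have htake : w.take j = w.take i ++ ext w i j := by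
    have : j = i + (j - i) := by omega
    rw [this, List.take_add]; simp [ext]
  have hw : T w = T (w.take i) ++ T (ext w i j) ++ T (w.drop j) := by
    rw [← T_append, ← T_append, ← htake, List.take_append_drop]
  have hPj : P w j = P w i + (T (ext w i j)).length := by
    unfold P; rw [htake, T_append]; simp
  unfold ext
  rw [hw]
  rw [List.append_assoc, List.drop_left' (by rfl), hPj]
  simp only [Nat.add_sub_cancel_left]
  rw [List.take_left' rfl]
  rfl

lemma T_singleton (a : F3) : T [a] = tau a := by simp [T]

lemma block_eq {w : List F3} {i : ℕ} (hi : i < w.length) :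
    ext (T w) (P w i) (P w (i+1)) = tau (w[i]) := by
  rw [T_ext (by omega) (by omega), ext_singleton hi, T_singleton]

lemma getElem_block {w : List F3} {i t : ℕ} (hi : i < w.length)
    (h1 : P w i ≤ t) (h2 : t < P w (i+1)) (ht : t < (T w).length)
    (hk : t - P w i < (tau w[i]).length) :
    (T w)[t] = (tau w[i])[t - P w i] := by
  have hb := block_eq hi
  have hP1 : P w (i+1) ≤ (T w).length := P_le_len _
  have hlen : t - P w i < (ext (T w) (P w i) (P w (i+1))).length := by
    rw [ext_length (le_of_lt (P_lt_succ hi)) hP1]; omega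
  have h3 := ext_getElem (l := T w) (a := P w i) (b := P w (i+1)) hP1
    (k := t - P w i) (by omega) hlen
  have h4 : (ext (T w) (P w i) (P w (i+1)))[t - P w i] = (tau w[i])[t - P w i] :=
    List.getElem_of_eq hb hlen
  rw [← h4, h3]
  exact getElem_congr rfl (by omega) _

lemma block_len {w : List F3} {i : ℕ} (hi : i < w.length) :
    (tau w[i]).length = P w (i+1) - P w i := by
  rw [P_succ hi]; omega

def Bdry (w : List F3) (t : ℕ) : Prop := ∃ i, i < w.length ∧ P w i = t

lemma pair_infix {w : List F3} {i : ℕ} (hi1 : 1 ≤ i) (hi : i < w.length) :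
    [w[i-1]'(by omega), w[i]] <:+: w := by
  obtain ⟨i', rfl⟩ : ∃ i', i = i' + 1 := ⟨i - 1, by omega⟩
  have h : ext w i' (i' + 2) = [w[i']'(by omega)] ++ [w[i'+1]] := by
    rw [show i' + 2 = (i' + 1) + 1 from rfl,
      ext_append (a := i') (b := i'+1) (by omega) (by omega) (by omega),
      ext_singleton (by omega), ext_singleton hi]
  have := ext_infix w i' (i' + 2)
  rw [h] at this
  simpa using this

lemma getElem_of_list_eq {l l' : List F3} (h : l = l') {k k' : ℕ} (hkk : k = k')
    (hk : k < l.length) (hk' : k' < l'.length) : l[k] = l'[k'] := by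
  subst h; subst hkk; rfl

lemma bdry_to_char {w : List F3} (h22 : ¬ ([2,2] : List F3) <:+: w) {t : ℕ}
    (ht1 : 1 ≤ t) (ht : t < (T w).length) (hb : Bdry w t) :
    (T w)[t] = 0 ∨ ((T w)[t] = 1 ∧ (T w)[t-1]'(by omega) = 2) := by
  obtain ⟨i, hi, hPi⟩ := hb
  have hpos0 := tau_len_pos w[i]
  have hval : (T w)[t] = (tau w[i])[t - P w i]'(by omega) :=
    getElem_block hi (by omega) (by rw [← hPi]; exact P_lt_succ hi) ht (by omega)
  rcases fin3_cases w[i] with h | h | h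
  · left; rw [hval]
    exact getElem_of_list_eq (congrArg tau h) (k' := 0) (by omega) (by omega) (by simp [tau])
  · left; rw [hval]
    exact getElem_of_list_eq (congrArg tau h) (k' := 0) (by omega) (by omega) (by simp [tau])
  · right
    refine ⟨by
      rw [hval]
      exact getElem_of_list_eq (congrArg tau h) (k' := 0) (by omega) (by omega)
        (by simp [tau]), ?_⟩
    have hi1 : 1 ≤ i := by
      rcases Nat.eq_zero_or_pos i with h0 | h0
      · exfalso; rw [h0, P_zero] at hPi; omega
      · exact h0
    obtain ⟨i', rfl⟩ : ∃ i', i = i' + 1 := ⟨i - 1, by omega⟩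
    have hi' : i' < w.length := by omega
    have hPs : P w (i' + 1) = P w i' + (tau w[i']).length := P_succ hi'
    have hpos := tau_len_pos w[i']
    have hval2 : (T w)[t-1]'(by omega) = (tau w[i'])[t - 1 - P w i']'(by omega) :=
      getElem_block hi' (by omega) (by omega) (by omega) (by omega)
    rcases fin3_cases w[i'] with h' | h' | h'
    · rw [hval2]
      exact getElem_of_list_eq (congrArg tau h') (k' := 2)
        (by rw [h'] at hPs; simp [tau] at hPs; omega) (by omega) (by simp [tau])
    · rw [hval2]
      exact getElem_of_list_eq (congrArg tau h') (k' := 1)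
        (by rw [h'] at hPs; simp [tau] at hPs; omega) (by omega) (by simp [tau])
    · exfalso
      apply h22
      have hp := pair_infix (i := i' + 1) (by omega) hi
      simp only [show ((i' + 1) - 1) = i' from by omega, h, h'] at hp
      exact hp

lemma char_to_bdry {w : List F3} {t : ℕ}
    (ht1 : 1 ≤ t) (ht : t < (T w).length)
    (hc : (T w)[t] = 0 ∨ ((T w)[t] = 1 ∧ (T w)[t-1]'(by omega) = 2)) :
    Bdry w t := by
  obtain ⟨i, hi, h1, h2⟩ := block_exists ht
  refine ⟨i, hi, ?_⟩
  by_contra hne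
  have hlt : P w i < t := by omega
  have hPs : P w (i + 1) = P w i + (tau w[i]).length := P_succ hi
  have hkb : t - P w i < (tau w[i]).length := by omega
  have hval : (T w)[t] = (tau w[i])[t - P w i]'(by omega) :=
    getElem_block hi (by omega) (by omega) ht (by omega)
  have hval2 : (T w)[t-1]'(by omega) = (tau w[i])[t - 1 - P w i]'(by omega) :=
    getElem_block hi (by omega) (by omega) (by omega) (by omega)
  rcases fin3_cases w[i] with h | h | h
  · -- tau = [0,1,2], index k ∈ {1,2}
    have hlen : (tau w[i]).length = 3 := by rw [h]; rfl
    rcases hc with hc0 | ⟨hc1, hc2⟩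
    · rw [hval] at hc0
      rcases (by omega : t - P w i = 1 ∨ t - P w i = 2) with hk | hk
      · rw [getElem_of_list_eq (congrArg tau h) hk (by omega) (by simp [tau])] at hc0
        exact absurd hc0 (by decide)
      · rw [getElem_of_list_eq (congrArg tau h) hk (by omega) (by simp [tau])] at hc0
        exact absurd hc0 (by decide)
    · rw [hval] at hc1
      rcases (by omega : t - P w i = 1 ∨ t - P w i = 2) with hk | hk
      · -- value is 1, check prev letter is 0
        rw [hval2] at hc2
        rw [getElem_of_list_eq (congrArg tau h) (k' := 0) (by omega) (by omega)
          (by simp [tau])] at hc2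
        exact absurd hc2 (by decide)
      · rw [getElem_of_list_eq (congrArg tau h) hk (by omega) (by simp [tau])] at hc1
        exact absurd hc1 (by decide)
  · have hlen : (tau w[i]).length = 2 := by rw [h]; rfl
    have hk : t - P w i = 1 := by omega
    rcases hc with hc0 | ⟨hc1, hc2⟩
    · rw [hval, getElem_of_list_eq (congrArg tau h) hk (by omega) (by simp [tau])] at hc0
      exact absurd hc0 (by decide)
    · rw [hval, getElem_of_list_eq (congrArg tau h) hk (by omega) (by simp [tau])] at hc1
      exact absurd hc1 (by decide)
  · have hlen : (tau w[i]).length = 1 := by rw [h]; rfl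
    omega

def SqFree {α : Type*} (w : List α) : Prop :=
  ∀ v : List α, v ≠ [] → ¬ (v ++ v) <:+: w

lemma sqfree_infix {u w : List F3} (h : SqFree w) (hinf : u <:+: w) : SqFree u :=
  fun v hv hvv => h v hv (hvv.trans hinf)

lemma suffix_tau {a b : F3} (δ : List F3) (h : tau a = δ ++ tau b) : a = b := by
  fin_cases a <;> fin_cases b <;>
    simp_all [tau] <;>
    (rcases δ with _|⟨x,_|⟨y,_|⟨z,δ⟩⟩⟩ <;> simp_all) <;>
    (try rfl)

lemma prefix_tau {a b : F3} (ρ : List F3) (h : tau a = tau b ++ ρ) : a = b := by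
  fin_cases a <;> fin_cases b <;>
    simp_all [tau] <;>
    (rcases ρ with _|⟨x,_|⟨y,_|⟨z,ρ⟩⟩⟩ <;> simp_all) <;>
    (try rfl)

lemma P_diff {w : List F3} {i j : ℕ} (hij : i ≤ j) (hj : j ≤ w.length) :
    P w i + (j - i) ≤ P w j := by
  induction j, hij using Nat.le_induction with
  | base => omega
  | succ j hij ih =>
    have hjl : j < w.length := by omega
    have := P_succ hjl
    have := tau_len_pos (w[j])
    have := ih (by omega)
    omega

lemma factor_lift {w v : List F3} (hv : v ≠ []) (h : v <:+: T w) :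
    ∃ u, u <:+: w ∧ u.length ≤ v.length ∧ v <:+: T u := by
  obtain ⟨q, hq, hve⟩ := infix_iff_ext.mp h
  have hlv : 1 ≤ v.length := List.length_pos_iff.mpr hv
  obtain ⟨i, hi, hi1, hi2⟩ := block_exists (w := w) (t := q) (by omega)
  obtain ⟨j, hj, hj1, hj2⟩ := block_exists (w := w) (t := q + v.length - 1) (by omega)
  have hij : i ≤ j := by
    have : P w i < P w (j+1) := by omega
    have := lt_of_P_lt this
    omega
  refine ⟨ext w i (j+1), ext_infix w i (j+1), ?_, ?_⟩
  · rw [ext_length (by omega) (by omega)]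
    rcases Nat.eq_or_lt_of_le hij with heq | hlt
    · omega
    · have := P_diff (w := w) (show i + 1 ≤ j by omega) (by omega)
      have hq1 : q + 1 ≤ P w (i+1) := by omega
      omega
  · have hTu : T (ext w i (j+1)) = ext (T w) (P w i) (P w (j+1)) :=
      (T_ext (by omega) (by omega)).symm
    have hPle : P w (j+1) ≤ (T w).length := P_le_len _
    have hsplit : ext (T w) (P w i) (P w (j+1)) =
        ext (T w) (P w i) q ++ ext (T w) q (q + v.length) ++
          ext (T w) (q + v.length) (P w (j+1)) := by
      rw [← ext_append (a := P w i) (by omega) (by omega) (by omega),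
        ← ext_append (by omega) (by omega) (by omega)]
    rw [hTu, hsplit, ← hve]
    exact ⟨_, _, rfl⟩

def SqAt (l : List F3) (q k : ℕ) : Prop :=
  1 ≤ k ∧ q + 2*k ≤ l.length ∧ ext l q (q+k) = ext l (q+k) (q+2*k)

instance (l : List F3) (q k : ℕ) : Decidable (SqAt l q k) :=
  inferInstanceAs (Decidable (_ ∧ _ ∧ _))

lemma sqAt_of_infix {v l : List F3} (hv : v ≠ []) (h : v ++ v <:+: l) :
    SqAt l (Classical.choose (infix_iff_ext.mp h)) v.length := by
  have hspec := Classical.choose_spec (infix_iff_ext.mp h)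
  set q := Classical.choose (infix_iff_ext.mp h) with hq
  obtain ⟨hle, heq⟩ := hspec
  have hlv : 1 ≤ v.length := List.length_pos_iff.mpr hv
  rw [List.length_append] at hle heq
  refine ⟨hlv, by omega, ?_⟩
  have hsplit : ext l q (q + (v.length + v.length)) =
      ext l q (q + v.length) ++ ext l (q + v.length) (q + (v.length + v.length)) :=
    ext_append (by omega) (by omega) (by omega)
  rw [hsplit] at heq
  have hl1 : (ext l q (q + v.length)).length = v.length := by
    rw [ext_length (by omega) (by omega)]; omega
  have := List.append_inj heq (by omega)
  rw [show q + 2 * v.length = q + (v.length + v.length) from by ring_nf]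
  rw [← this.1, ← this.2]

lemma infix_of_sqAt {l : List F3} {q k : ℕ} (h : SqAt l q k) :
    ∃ v : List F3, v ≠ [] ∧ v.length = k ∧ v ++ v <:+: l := by
  obtain ⟨hk, hle, heq⟩ := h
  refine ⟨ext l q (q+k), ?_, ?_, ?_⟩
  · have : (ext l q (q+k)).length = k := by rw [ext_length (by omega) (by omega)]; omega
    intro hc; rw [hc] at this; simp at this; omega
  · rw [ext_length (by omega) (by omega)]; omega
  · have : ext l q (q + 2*k) = ext l q (q+k) ++ ext l (q+k) (q+2*k) :=
      ext_append (by omega) (by omega) (by omega)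
    rw [← heq] at this
    rw [← this]
    exact ext_infix _ _ _

lemma sqFree_iff_no_sqAt {l : List F3} : SqFree l ↔ ∀ q k, ¬ SqAt l q k := by
  constructor
  · intro h q k hs
    obtain ⟨v, hv, _, hvv⟩ := infix_of_sqAt hs
    exact h v hv hvv
  · intro h v hv hvv
    exact h _ _ (sqAt_of_infix hv hvv)

def words : ℕ → List (List F3)
  | 0 => [[]]
  | n+1 => [] :: ((words n).flatMap fun u => [0::u, 1::u, 2::u])

lemma mem_words : ∀ (n : ℕ) (v : List F3), v.length ≤ n → v ∈ words n := by
  intro n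
  induction n with
  | zero =>
    intro v hv
    obtain rfl := List.length_eq_zero_iff.mp (show v.length = 0 by omega)
    simp [words]
  | succ n ih =>
    intro v hv
    rcases v with _ | ⟨a, u⟩
    · simp [words]
    · have hu : u ∈ words n := ih u (by simp at hv; omega)
      simp only [words, List.mem_cons, List.mem_flatMap]
      right
      exact ⟨u, hu, by fin_cases a <;> simp⟩

set_option maxRecDepth 10000 in
lemma L1dec : ∀ u ∈ words 3, ¬ ([0,1,0] : List F3) <:+: T u ∧ ¬ ([2,1,2] : List F3) <:+: T u := by
  decide

def checkB : Bool := (words 6).all fun u =>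
  !((List.range 7).all fun q => (List.range 7).all fun k => !(decide (SqAt u q k)))
  || decide (([0,1,0] : List F3) <:+: u) || decide (([2,1,2] : List F3) <:+: u)
  || ((List.range 19).all fun q => (List.range 4).all fun k => !(decide (SqAt (T u) q k)))

set_option maxRecDepth 100000 in
lemma checkB_true : checkB = true := by rfl

lemma T_len_le (u : List F3) : (T u).length ≤ 3 * u.length := by
  induction u with
  | nil => simp [T_nil]
  | cons a u ih =>
    rw [T_cons, List.length_append]
    have := tau_len_le a
    simp only [List.length_cons]
    omega

lemma short_square_core : ∀ u : List F3, u.length ≤ 6 → SqFree u →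
    ¬ ([0,1,0] : List F3) <:+: u → ¬ ([2,1,2] : List F3) <:+: u →
    ∀ q k, k ≤ 3 → ¬ SqAt (T u) q k := by
  intro u hlen hsf h010 h212 q k hk hs
  have hu : u ∈ words 6 := mem_words 6 u hlen
  have hc := List.all_eq_true.mp checkB_true u hu
  simp only [Bool.or_eq_true, Bool.not_eq_true', List.all_eq_true, List.all_eq_false,
    decide_eq_true_eq, decide_eq_false_iff_not, List.mem_range, not_not] at hc
  rcases hc with ((⟨q', _, hq'⟩ | hc) | hc) | hc
  · push_neg at hq'
    obtain ⟨k', _, hsq⟩ := hq'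
    exact sqFree_iff_no_sqAt.mp hsf q' k' hsq
  · exact h010 hc
  · exact h212 hc
  · have hql : q + 2*k ≤ (T u).length := hs.2.1
    have hTl := T_len_le u
    have hkk : 1 ≤ k := hs.1
    exact hc q (by omega) k (by omega) hs


lemma caseA {w : List F3} {i₁ i₂ j j₂ : ℕ} (hsf : SqFree w)
    (h1 : i₁ + 1 ≤ i₂) (h2 : j = i₂ + 1) (h3 : j ≤ j₂) (h4 : j₂ ≤ w.length)
    (h5 : i₂ < w.length) (h6 : i₁ < w.length)
    (hU : ext w (i₁+1) i₂ = ext w j j₂)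
    (hg : w[i₁] = w[i₂]) : False := by
  have hdec : ext w i₁ j₂ = [w[i₁]] ++ ext w (i₁+1) i₂ ++ [w[i₂]] ++ ext w j j₂ := by
    rw [ext_append (a := i₁) (b := i₁+1) (by omega) (by omega) (by omega),
      ext_append (a := i₁+1) (b := i₂) (by omega) (by omega) (by omega),
      ext_append (a := i₂) (b := j) (by omega) (by omega) (by omega),
      ext_singleton h6, h2, ext_singleton h5]
    simp [List.append_assoc]
  apply hsf (w[i₂] :: ext w (i₁+1) i₂) (by simp)
  have : ext w i₁ j₂ = (w[i₂] :: ext w (i₁+1) i₂) ++ (w[i₂] :: ext w (i₁+1) i₂) := by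
    rw [hdec, ← hU, hg]
    simp
  rw [← this]
  exact ext_infix _ _ _

lemma caseB {w : List F3} {i₁ i₂ j₂ : ℕ} (hsf : SqFree w)
    (h1 : i₁ + 1 ≤ i₂) (h3 : i₂ + 1 ≤ j₂) (h4 : j₂ < w.length)
    (h5 : i₂ < w.length)
    (hU : ext w (i₁+1) i₂ = ext w (i₂+1) j₂)
    (hg : w[j₂] = w[i₂]) : False := by
  have hdec : ext w (i₁+1) (j₂+1) =
      ext w (i₁+1) i₂ ++ [w[i₂]] ++ ext w (i₂+1) j₂ ++ [w[j₂]] := by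
    rw [ext_append (a := i₁+1) (b := i₂) (by omega) (by omega) (by omega),
      ext_append (a := i₂) (b := i₂+1) (by omega) (by omega) (by omega),
      ext_append (a := i₂+1) (b := j₂) (by omega) (by omega) (by omega),
      ext_singleton h5, ext_singleton h4]
    simp [List.append_assoc]
  apply hsf (ext w (i₁+1) i₂ ++ [w[i₂]]) (by simp)
  have heq : ext w (i₁+1) (j₂+1) =
      (ext w (i₁+1) i₂ ++ [w[i₂]]) ++ (ext w (i₁+1) i₂ ++ [w[i₂]]) := by
    rw [hdec, ← hU, hg]
    simp
  rw [← heq]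
  exact ext_infix _ _ _

lemma caseC {w : List F3} {i₁ i₂ j₂ : ℕ} (hsf : SqFree w)
    (h1 : i₁ + 1 ≤ i₂) (h3 : i₂ + 2 ≤ j₂) (h4 : j₂ < w.length)
    (h5 : i₂ < w.length) (h6 : i₁ < w.length) (h7 : i₂ + 1 < w.length)
    (hU : ext w (i₁+1) i₂ = ext w (i₂+2) j₂)
    (hg1 : w[i₁] = w[i₂+1]) (hg2 : w[j₂] = w[i₂]) : False := by
  have hdec : ext w i₁ (j₂+1) =
      [w[i₁]] ++ ext w (i₁+1) i₂ ++ [w[i₂]] ++ [w[i₂+1]] ++ ext w (i₂+2) j₂ ++ [w[j₂]] := by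
    rw [ext_append (a := i₁) (b := i₁+1) (by omega) (by omega) (by omega),
      ext_append (a := i₁+1) (b := i₂) (by omega) (by omega) (by omega),
      ext_append (a := i₂) (b := i₂+1) (by omega) (by omega) (by omega),
      ext_append (a := i₂+1) (b := i₂+2) (by omega) (by omega) (by omega),
      ext_append (a := i₂+2) (b := j₂) (by omega) (by omega) (by omega),
      ext_singleton h6, ext_singleton h5, ext_singleton h7,
      show i₂ + 1 + 1 = i₂ + 2 from rfl, ext_singleton h4]
    simp [List.append_assoc]
  apply hsf (w[i₂+1] :: (ext w (i₁+1) i₂ ++ [w[i₂]])) (by simp)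
  have heq : ext w i₁ (j₂+1) =
      (w[i₂+1] :: (ext w (i₁+1) i₂ ++ [w[i₂]])) ++
        (w[i₂+1] :: (ext w (i₁+1) i₂ ++ [w[i₂]])) := by
    rw [hdec, ← hU, hg1, hg2]
    simp
  rw [← heq]
  exact ext_infix _ _ _

lemma zero_u_one {w U : List F3} (hsf : SqFree w) (h010 : ¬ ([0,1,0] : List F3) <:+: w)
    (h212 : ¬ ([2,1,2] : List F3) <:+: w)
    (h : ([0] ++ U ++ [1] ++ U ++ [0] : List F3) <:+: w) : False := by
  rcases U with _ | ⟨u0, Ur⟩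
  · exact h010 (by simpa using h)
  rcases fin3_cases u0 with h0 | h0 | h0
  · subst h0
    apply hsf [0] (by simp)
    refine List.IsInfix.trans ?_ h
    exact ⟨[], Ur ++ [1] ++ (0 :: Ur) ++ [0], by simp⟩
  · subst h0
    apply hsf [1] (by simp)
    refine List.IsInfix.trans ?_ h
    exact ⟨0 :: (1 :: Ur), Ur ++ [0], by simp⟩
  · subst h0
    rcases List.eq_nil_or_concat Ur with rfl | ⟨Ur₀, ul, rfl⟩
    · apply h212
      refine List.IsInfix.trans ?_ h
      exact ⟨[0], [0], by simp⟩
    rcases fin3_cases ul with h1 | h1 | h1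
    · subst h1
      apply hsf [0] (by simp)
      refine List.IsInfix.trans ?_ h
      exact ⟨[0] ++ (2 :: (Ur₀.concat 0)) ++ [1] ++ (2 :: Ur₀), [],
        by simp [List.concat_eq_append]⟩
    · subst h1
      apply hsf [1] (by simp)
      refine List.IsInfix.trans ?_ h
      exact ⟨[0] ++ (2 :: Ur₀), (2 :: (Ur₀.concat 1)) ++ [0],
        by simp [List.concat_eq_append]⟩
    · subst h1
      apply h212
      refine List.IsInfix.trans ?_ h
      exact ⟨[0] ++ (2 :: Ur₀), (Ur₀.concat 2) ++ [0],
        by simp [List.concat_eq_append]⟩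

lemma no_forbidden (w : List F3) :
    ¬ ([0,1,0] : List F3) <:+: T w ∧ ¬ ([2,1,2] : List F3) <:+: T w := by
  constructor <;> intro h <;>
    obtain ⟨u, huw, hul, hinf⟩ := factor_lift (by simp) h
  · exact (L1dec u (mem_words 3 u (by simpa using hul))).1 hinf
  · exact (L1dec u (mem_words 3 u (by simpa using hul))).2 hinf

lemma main_step {w : List F3} (hsf : SqFree w)
    (h010 : ¬ ([0,1,0] : List F3) <:+: w) (h212 : ¬ ([2,1,2] : List F3) <:+: w) :
    SqFree (T w) := by
  rw [sqFree_iff_no_sqAt]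
  intro q n hs
  rcases le_or_gt n 3 with hshort | hlong
  · -- short squares: finite check
    obtain ⟨v, hv, hvlen, hvv⟩ := infix_of_sqAt hs
    obtain ⟨u, huw, hul, hinf⟩ := factor_lift (by simp [hv] : (v ++ v : List F3) ≠ []) hvv
    have hul6 : u.length ≤ 6 := by
      have hle : (v ++ v).length = 2 * n := by rw [List.length_append]; omega
      omega
    exact short_square_core u hul6 (sqfree_infix hsf huw)
      (fun hh => h010 (hh.trans huw)) (fun hh => h212 (hh.trans huw))
      _ v.length (by omega) (sqAt_of_infix hv hinf)
  · -- long squares: lift to w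
    obtain ⟨hn1, hqlen, heq⟩ := hs
    have hTlen : q + 2*n ≤ (T w).length := hqlen
    have no22 : ¬ ([2,2] : List F3) <:+: w := fun h => hsf [2] (by simp) h
    -- pointwise periodicity
    have key : ∀ s, q ≤ s → s < q + n → ∀ (h1 : s < (T w).length) (h2 : s + n < (T w).length),
        (T w)[s] = (T w)[s+n] := by
      intro s hs1 hs2 h1 h2
      have hlA : s - q < (ext (T w) q (q+n)).length := by
        rw [ext_length (by omega) (by omega)]; omega
      have hlB : s - q < (ext (T w) (q+n) (q+2*n)).length := by
        rw [ext_length (by omega) (by omega)]; omega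
      have e0 : (ext (T w) q (q+n))[s-q] = (ext (T w) (q+n) (q+2*n))[s-q]'hlB :=
        List.getElem_of_eq heq hlA
      have e1 : (ext (T w) q (q+n))[s-q] = (T w)[q + (s-q)]'(by omega) :=
        ext_getElem (by omega) (by omega) hlA
      have e2 : (ext (T w) (q+n) (q+2*n))[s-q]'hlB = (T w)[q+n + (s-q)]'(by omega) :=
        ext_getElem (by omega) (by omega) hlB
      calc (T w)[s] = (T w)[q + (s-q)]'(by omega) := getElem_congr rfl (by omega) _
        _ = (ext (T w) q (q+n))[s-q] := e1.symm
        _ = (ext (T w) (q+n) (q+2*n))[s-q]'hlB := e0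
        _ = (T w)[q+n + (s-q)]'(by omega) := e2
        _ = (T w)[s+n] := getElem_congr rfl (by omega) _
    -- segment periodicity
    have seg : ∀ a b, q ≤ a → a ≤ b → b ≤ q + n →
        ext (T w) a b = ext (T w) (a+n) (b+n) := by
      intro a b ha hab hb
      apply List.ext_getElem
      · rw [ext_length hab (by omega), ext_length (by omega) (by omega)]; omega
      · intro m h1 h2
        have hm : m < b - a := by rw [ext_length hab (by omega)] at h1; omega
        rw [ext_getElem (by omega) hm, ext_getElem (by omega) (by omega)]
        calc (T w)[a + m] = (T w)[a + m + n] :=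
              key (a+m) (by omega) (by omega) (by omega) (by omega)
          _ = (T w)[a + n + m] := getElem_congr rfl (by omega) _
    -- boundary transfer
    have btrans : ∀ t, q + 1 ≤ t → t < q + n → (Bdry w t ↔ Bdry w (t+n)) := by
      intro t h1 h2
      have c2 : t < (T w).length := by omega
      have c3 : t + n < (T w).length := by omega
      have e1 : (T w)[t] = (T w)[t+n] := key t (by omega) (by omega) c2 c3
      have e2 : (T w)[t-1]'(by omega) = (T w)[t+n-1]'(by omega) := by
        calc (T w)[t-1] = (T w)[t-1+n] := key (t-1) (by omega) (by omega) (by omega) (by omega)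
          _ = (T w)[t+n-1] := getElem_congr rfl (by omega) _
      constructor
      · intro hb
        apply char_to_bdry (by omega) c3
        have hch := bdry_to_char no22 (by omega) c2 hb
        rw [e1, e2] at hch
        exact hch
      · intro hb
        apply char_to_bdry (by omega) c2
        have hch := bdry_to_char no22 (by omega) c3 hb
        rw [← e1, ← e2] at hch
        exact hch
    -- blocks around q and q + n - 1
    obtain ⟨i₁, hi₁w, hi₁a, hi₁b⟩ := block_exists (w := w) (t := q) (by omega)
    obtain ⟨i₂, hi₂w, hi₂a, hi₂b⟩ := block_exists (w := w) (t := q+n-1) (by omega)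
    have hPs₁ := P_succ_le hi₁w
    have ht₁a : q < P w (i₁+1) := hi₁b
    have ht₁b : P w (i₁+1) ≤ q + 3 := by omega
    have hi : i₁ + 1 ≤ i₂ := by
      have h' : P w (i₁+1) < P w (i₂+1) := by omega
      have := lt_of_P_lt h'
      omega
    have ht₁₂ : P w (i₁+1) ≤ P w i₂ := P_mono w hi
    -- no boundaries in gaps
    have hminl : ∀ t, q < t → t < P w (i₁+1) → ¬ Bdry w t := by
      rintro t ha hb ⟨m, hmw, hPm⟩
      have hx1 : i₁ < m := lt_of_P_lt (w := w) (by omega)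
      have hx2 : m < i₁ + 1 := lt_of_P_lt (w := w) (by omega)
      omega
    have hmaxr : ∀ t, P w i₂ < t → t < q + n → ¬ Bdry w t := by
      rintro t ha hb ⟨m, hmw, hPm⟩
      have hx1 : i₂ < m := lt_of_P_lt (w := w) (by omega)
      have hx2 : m < i₂ + 1 := lt_of_P_lt (w := w) (by omega)
      omega
    -- boundary images j, j₂
    have hi₁len : i₁ + 1 < w.length := by
      have hx : P w (i₁+1) < P w w.length := by rw [P_last]; omega
      exact lt_of_P_lt hx
    have hBj : Bdry w (P w (i₁+1) + n) :=
      (btrans (P w (i₁+1)) (by omega) (by omega)).mp ⟨i₁+1, hi₁len, rfl⟩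
    obtain ⟨j, hjw, hPj⟩ := hBj
    have ht₂q1 : q + 1 ≤ P w i₂ := by omega
    have hBj₂ : Bdry w (P w i₂ + n) :=
      (btrans (P w i₂) (by omega) (by omega)).mp ⟨i₂, hi₂w, rfl⟩
    obtain ⟨j₂, hj₂w, hPj₂⟩ := hBj₂
    -- no boundaries in shifted gaps
    have hnor : ∀ t, P w i₂ + n < t → t < q + 2*n → ¬ Bdry w t := by
      intro t ha hb hB
      refine hmaxr (t-n) (by omega) (by omega) ?_
      exact (btrans (t-n) (by omega) (by omega)).mpr
        (by rw [show t-n+n = t from by omega]; exact hB)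
    have hnol : ∀ t, q + n < t → t < P w (i₁+1) + n → ¬ Bdry w t := by
      intro t ha hb hB
      refine hminl (t-n) (by omega) (by omega) ?_
      exact (btrans (t-n) (by omega) (by omega)).mpr
        (by rw [show t-n+n = t from by omega]; exact hB)
    -- U = U'
    have hjj2 : j ≤ j₂ := by
      by_contra hc
      have := P_strict (w := w) (show j₂ < j from by omega) (by omega)
      omega
    have hUeq : ext w (i₁+1) i₂ = ext w j j₂ := by
      apply T_inj
      rw [← T_ext hi (le_of_lt hi₂w), ← T_ext hjj2 (le_of_lt hj₂w), hPj, hPj₂]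
      exact seg (P w (i₁+1)) (P w i₂) (by omega) ht₁₂ (by omega)
    -- γ relation : tau w[i₁] ends with ext (T w) q (P w (i₁+1))
    have hsuf0 : tau (w[i₁]) =
        ext (T w) (P w i₁) q ++ ext (T w) q (P w (i₁+1)) := by
      rw [← ext_append hi₁a (by omega) (by omega)]
      exact (block_eq hi₁w).symm
    have hγlen : (ext (T w) q (P w (i₁+1))).length = P w (i₁+1) - q :=
      ext_length (l := T w) (by omega) (by omega)
    -- j₂ block facts
    have hq2nP : q + 2*n ≤ P w (j₂+1) := by
      by_contra hc
      push_neg at hc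
      have hj₂1len : j₂ + 1 < w.length := by
        have hx : P w (j₂+1) < P w w.length := by rw [P_last]; omega
        exact lt_of_P_lt hx
      have hgt : P w j₂ < P w (j₂+1) := P_lt_succ (by omega)
      exact hnor (P w (j₂+1)) (by omega) (by omega) ⟨j₂+1, hj₂1len, rfl⟩
    have hpre0 : tau (w[j₂]) =
        ext (T w) (P w i₂) (q+n) ++ ext (T w) (q+2*n) (P w (j₂+1)) := by
      have hsp : ext (T w) (P w j₂) (P w (j₂+1)) =
          ext (T w) (P w j₂) (q+2*n) ++ ext (T w) (q+2*n) (P w (j₂+1)) :=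
        ext_append (by omega) (by omega) (P_le_len _)
      have hseg2 : ext (T w) (P w j₂) (q+2*n) = ext (T w) (P w i₂) (q+n) := by
        rw [hPj₂]
        have hx := seg (P w i₂) (q+n) (by omega) (by omega) (by omega)
        rw [show q + n + n = q + 2*n from by omega] at hx
        exact hx.symm
      calc tau (w[j₂]) = ext (T w) (P w j₂) (P w (j₂+1)) := (block_eq hj₂w).symm
        _ = ext (T w) (P w j₂) (q+2*n) ++ ext (T w) (q+2*n) (P w (j₂+1)) := hsp
        _ = ext (T w) (P w i₂) (q+n) ++ ext (T w) (q+2*n) (P w (j₂+1)) := by rw [hseg2]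
    have hβlen : (ext (T w) (P w i₂) (q+n)).length = q + n - P w i₂ :=
      ext_length (l := T w) (by omega) (by omega)
    by_cases hqnB : Bdry w (q+n)
    · -- two middle blocks: m = i₂+1, j = i₂+2
      obtain ⟨m, hmw, hPm⟩ := hqnB
      have hm1 : i₂ < m := lt_of_P_lt (w := w) (by omega)
      have hm2 : m < j := lt_of_P_lt (w := w) (by omega)
      have hm3 : m = i₂ + 1 := by
        by_contra hc
        have hx1 : P w (i₂+1) < P w m := P_strict (w := w) (by omega) (by omega)
        have hx2 : P w i₂ < P w (i₂+1) := P_lt_succ hi₂w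
        exact hmaxr (P w (i₂+1)) (by omega) (by omega) ⟨i₂+1, by omega, rfl⟩
      have hm4 : j = i₂ + 2 := by
        by_contra hc
        have hx2 : P w m < P w (m+1) := P_lt_succ hmw
        have hx4 : P w (m+1) < P w j := P_strict (w := w) (by omega) (by omega)
        exact hnol (P w (m+1)) (by omega) (by omega) ⟨m+1, by omega, rfl⟩
      have hmj : m + 1 = j := by omega
      have hgm : tau (w[m]) = ext (T w) q (P w (i₁+1)) := by
        calc tau (w[m]) = ext (T w) (P w m) (P w (m+1)) := (block_eq hmw).symm
          _ = ext (T w) (q+n) (P w (i₁+1) + n) := by rw [hPm, hmj, hPj]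
          _ = ext (T w) q (P w (i₁+1)) :=
              (seg q (P w (i₁+1)) le_rfl (by omega) (by omega)).symm
      have hg02 : w[i₁] = w[m] := suffix_tau _ (by rw [hsuf0, hgm])
      have hgi₂ : tau (w[i₂]) = ext (T w) (P w i₂) (q+n) := by
        calc tau (w[i₂]) = ext (T w) (P w i₂) (P w (i₂+1)) := (block_eq hi₂w).symm
          _ = ext (T w) (P w i₂) (q+n) := by
              rw [show P w (i₂+1) = q+n from by rw [← hm3]; exact hPm]
      have hg2' : w[j₂] = w[i₂] := prefix_tau _ (by rw [hpre0, hgi₂])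
      have hgm' : w[m] = w[i₂+1]'(by omega) := getElem_congr rfl hm3 _
      exact caseC hsf hi (by omega) hj₂w hi₂w hi₁w (by omega)
        (by rw [← hm4]; exact hUeq) (by rw [hg02, hgm']) hg2'
    · -- one middle block: j = i₂ + 1
      have hij : i₂ < j := lt_of_P_lt (w := w) (by omega)
      have hj1 : j = i₂ + 1 := by
        by_contra hc
        have hx1 : P w (i₂+1) ≤ P w j := P_mono w (by omega)
        have hx2 : P w i₂ < P w (i₂+1) := P_lt_succ hi₂w
        have hx3 : P w (i₂+1) < P w j := P_strict (w := w) (by omega) (by omega)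
        rcases lt_trichotomy (P w (i₂+1)) (q+n) with hy | hy | hy
        · exact hmaxr (P w (i₂+1)) (by omega) (by omega) ⟨i₂+1, by omega, rfl⟩
        · exact hqnB (hy ▸ ⟨i₂+1, by omega, rfl⟩)
        · exact hnol (P w (i₂+1)) (by omega) (by omega) ⟨i₂+1, by omega, rfl⟩
      have hsplit : tau (w[i₂]) =
          ext (T w) (P w i₂) (q+n) ++ ext (T w) q (P w (i₁+1)) := by
        calc tau (w[i₂]) = ext (T w) (P w i₂) (P w (i₂+1)) := (block_eq hi₂w).symm
          _ = ext (T w) (P w i₂) (P w (i₁+1) + n) := by rw [← hj1, hPj]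
          _ = ext (T w) (P w i₂) (q+n) ++ ext (T w) (q+n) (P w (i₁+1) + n) :=
              ext_append (by omega) (by omega) (by omega)
          _ = ext (T w) (P w i₂) (q+n) ++ ext (T w) q (P w (i₁+1)) := by
              rw [← seg q (P w (i₁+1)) le_rfl (by omega) (by omega)]
      have hlsum := congrArg List.length hsplit
      rw [List.length_append, hβlen, hγlen] at hlsum
      -- case analysis on the middle letter
      rcases fin3_cases (w[i₂]) with hg | hg | hg
      · -- tau = [0,1,2]
        rw [hg] at hsplit hlsum
        simp only [tau] at hsplit
        simp [tau] at hlsum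
        rcases (by omega : q + n - P w i₂ = 1 ∨ q + n - P w i₂ = 2) with hlb | hlb
        · -- β = [0], γ = [1,2]
          obtain ⟨b, hb⟩ := List.length_eq_one_iff.mp (hβlen.trans hlb)
          rw [hb] at hsplit
          have hβγ : b = 0 ∧ ext (T w) q (P w (i₁+1)) = [1,2] := by
            have := hsplit.symm
            simp at this
            exact ⟨this.1, this.2⟩
          rw [hβγ.2] at hsuf0
          rcases fin3_cases (w[i₁]) with hg0 | hg0 | hg0
          · exact caseA hsf hi hj1 hjj2 (by omega) hi₂w hi₁w hUeq (by rw [hg0, hg])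
          · exfalso
            rw [hg0] at hsuf0
            have hl := congrArg List.length hsuf0
            simp [tau] at hl
            rw [hl] at hsuf0
            simp [tau] at hsuf0
          · exfalso
            rw [hg0] at hsuf0
            have hl := congrArg List.length hsuf0
            simp [tau] at hl
        · -- β = [0,1], γ = [2]
          obtain ⟨b1, b2, hb⟩ := List.length_eq_two.mp (hβlen.trans hlb)
          rw [hb] at hsplit hpre0
          have hβγ : b1 = 0 ∧ b2 = 1 := by
            have := hsplit.symm
            simp at this
            exact ⟨this.1, this.2.1⟩
          rw [hβγ.1, hβγ.2] at hpre0
          rcases fin3_cases (w[j₂]) with hg' | hg' | hg'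
          · exact caseB hsf hi (by omega) hj₂w hi₂w (by rw [← hj1]; exact hUeq)
              (by rw [hg', hg])
          · exfalso
            rw [hg'] at hpre0
            simp [tau] at hpre0
          · exfalso
            rw [hg'] at hpre0
            have hl := congrArg List.length hpre0
            simp [tau] at hl
      · -- tau = [0,2] : β = [0], γ = [2]
        rw [hg] at hsplit hlsum
        simp only [tau] at hsplit
        simp [tau] at hlsum
        have hlb : q + n - P w i₂ = 1 := by omega
        obtain ⟨b, hb⟩ := List.length_eq_one_iff.mp (hβlen.trans hlb)
        rw [hb] at hsplit hpre0
        have hβγ : b = 0 ∧ ext (T w) q (P w (i₁+1)) = [2] := by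
          have := hsplit.symm
          simp at this
          exact ⟨this.1, this.2⟩
        rw [hβγ.1] at hpre0
        rw [hβγ.2] at hsuf0
        rcases fin3_cases (w[i₁]) with hg0 | hg0 | hg0
        · -- w[i₁] = 0 ; look at w[j₂]
          rcases fin3_cases (w[j₂]) with hg' | hg' | hg'
          · -- full 0 U 1 U 0 configuration
            have hdec : ext w i₁ (j₂+1) =
                [w[i₁]] ++ ext w (i₁+1) i₂ ++ [w[i₂]] ++ ext w j j₂ ++ [w[j₂]] := by
              rw [ext_append (a := i₁) (b := i₁+1) (by omega) (by omega) (by omega),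
                ext_append (a := i₁+1) (b := i₂) (by omega) (by omega) (by omega),
                ext_append (a := i₂) (b := j) (by omega) (by omega) (by omega),
                ext_append (a := j) (b := j₂) (by omega) (by omega) (by omega),
                ext_singleton hi₁w, hj1, ext_singleton hi₂w, ext_singleton hj₂w]
              simp [List.append_assoc]
            refine zero_u_one (U := ext w (i₁+1) i₂) hsf h010 h212 ?_
            have heqq : ([0] ++ ext w (i₁+1) i₂ ++ [1] ++ ext w (i₁+1) i₂ ++ [0] : List F3) =
                ext w i₁ (j₂+1) := by
              rw [hdec, hg0, hg, hg', hUeq]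
            rw [heqq]
            exact ext_infix _ _ _
          · exact caseB hsf hi (by omega) hj₂w hi₂w (by rw [← hj1]; exact hUeq)
              (by rw [hg', hg])
          · exfalso
            rw [hg'] at hpre0
            simp [tau] at hpre0
        · exact caseA hsf hi hj1 hjj2 (by omega) hi₂w hi₁w hUeq (by rw [hg0, hg])
        · exfalso
          rw [hg0] at hsuf0
          have hl := congrArg List.length hsuf0
          simp [tau] at hl
          rw [hl] at hsuf0
          simp [tau] at hsuf0
      · -- tau = [1] : impossible, needs length ≥ 2
        rw [hg] at hlsum
        simp only [tau] at hlsum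
        simp at hlsum
        omega

def Reduced (w : List (Fin 4)) : Prop :=
  ∀ p ∈ ([[0,2],[2,0],[1,3],[3,1]] : List (List (Fin 4))), ¬ p <:+: w

def DeanWord (w : List (Fin 4)) : Prop := Reduced w ∧ SqFree w

def IFactor {α : Type*} (v : List α) (w : ℕ → α) : Prop :=
  ∃ i, v = (List.range v.length).map fun k => w (i + k)

def ISqFree {α : Type*} (w : ℕ → α) : Prop :=
  ∀ v : List α, v ≠ [] → ¬ IFactor (v ++ v) w

def IReduced (w : ℕ → Fin 4) : Prop :=
  ∀ p ∈ ([[0,2],[2,0],[1,3],[3,1]] : List (List (Fin 4))), ¬ IFactor p w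

def IDean (w : ℕ → Fin 4) : Prop := IReduced w ∧ ISqFree w

def Wn : ℕ → List F3 := fun n => T^[n] [0]

lemma Wn_succ (n : ℕ) : Wn (n+1) = T (Wn n) := Function.iterate_succ_apply' T n [0]

lemma Wn_prefix (n : ℕ) : Wn n <+: Wn (n+1) := by
  induction n with
  | zero => exact ⟨[1,2], rfl⟩
  | succ n ih =>
    rw [Wn_succ, Wn_succ]
    exact T_prefix ih

lemma Wn_prefix_le {m n : ℕ} (h : m ≤ n) : Wn m <+: Wn n := by
  induction n, h using Nat.le_induction with
  | base => exact List.prefix_refl _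
  | succ n hmn ih => exact ih.trans (Wn_prefix n)

lemma T_len_ge (u : List F3) : u.length ≤ (T u).length := by
  induction u with
  | nil => simp [T_nil]
  | cons a u ih =>
    rw [T_cons, List.length_append]
    have := tau_len_pos a
    simp only [List.length_cons]
    omega

lemma Wn_len (n : ℕ) : n < (Wn n).length := by
  induction n with
  | zero => simp [Wn]
  | succ n ih =>
    obtain ⟨r, hr⟩ := Wn_prefix_le (Nat.zero_le n)
    have hW0 : Wn 0 = [0] := rfl
    rw [hW0] at hr
    have hT := T_len_ge r
    have hlr : (Wn n).length = 1 + r.length := by rw [← hr]; simp [Nat.add_comm]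
    have : Wn (n+1) = T ([0] ++ r) := by rw [Wn_succ, hr]
    rw [this, T_append, List.length_append]
    have h0 : (T [0]).length = 3 := rfl
    omega

def hw : ℕ → F3 := fun k => (Wn (k+1)).getD k 0

lemma hw_eq {n k : ℕ} (hk : k < (Wn n).length) : hw k = (Wn n)[k] := by
  unfold hw
  rcases le_total (k+1) n with h | h
  · have hp : Wn (k+1) <+: Wn n := Wn_prefix_le h
    have hlen : k < (Wn (k+1)).length := by have := Wn_len (k+1); omega
    rw [List.getD_eq_getElem _ _ hlen]
    exact hp.getElem hlen
  · have hp : Wn n <+: Wn (k+1) := Wn_prefix_le h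
    have hlen : k < (Wn (k+1)).length := lt_of_lt_of_le hk hp.length_le
    rw [List.getD_eq_getElem _ _ hlen]
    exact (hp.getElem hk).symm

lemma ifactor_infix {v : List F3} (h : IFactor v hw) : ∃ m, v <:+: Wn m := by
  obtain ⟨i, hi⟩ := h
  refine ⟨i + v.length + 1, ?_⟩
  have hlen : i + v.length < (Wn (i + v.length + 1)).length := by
    have := Wn_len (i + v.length + 1); omega
  rw [infix_iff_ext]
  refine ⟨i, by omega, ?_⟩
  apply List.ext_getElem
  · rw [ext_length (by omega) (by omega)]; omega
  · intro k h1 h2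
    rw [ext_getElem (by omega) (by omega)]
    have hv : v[k] = hw (i + k) := by
      have := List.getElem_of_eq hi h1
      rw [this]
      simp
    rw [hv, hw_eq (n := i + v.length + 1) (by omega)]

lemma Wn_good (n : ℕ) : SqFree (Wn n) ∧
    ¬ ([0,1,0] : List F3) <:+: Wn n ∧ ¬ ([2,1,2] : List F3) <:+: Wn n := by
  induction n with
  | zero =>
    refine ⟨?_, ?_, ?_⟩
    · intro v hv hvv
      have h1 := hvv.length_le
      have h2 : 1 ≤ v.length := List.length_pos_iff.mpr hv
      rw [List.length_append] at h1
      have : (Wn 0).length = 1 := rfl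
      omega
    · intro h
      have := h.length_le
      have h0 : (Wn 0).length = 1 := rfl
      simp at this
      omega
    · intro h
      have := h.length_le
      have h0 : (Wn 0).length = 1 := rfl
      simp at this
      omega
  | succ n ih =>
    rw [Wn_succ]
    exact ⟨main_step ih.1 ih.2.1 ih.2.2, (no_forbidden _).1, (no_forbidden _).2⟩

theorem stmt0 :
    ∃ w : ℕ → Fin 3, ISqFree w ∧
      ¬ IFactor ([0,1,0] : List (Fin 3)) w ∧ ¬ IFactor ([2,1,2] : List (Fin 3)) w := by
  refine ⟨hw, ?_, ?_, ?_⟩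
  · intro v hv hf
    obtain ⟨m, hm⟩ := ifactor_infix hf
    exact (Wn_good m).1 v hv hm
  · intro hf
    obtain ⟨m, hm⟩ := ifactor_infix hf
    exact (Wn_good m).2.1 hm
  · intro hf
    obtain ⟨m, hm⟩ := ifactor_infix hf
    exact (Wn_good m).2.2 hm
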